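/- Let H be a Hilbert space, Γ a self-adjoint non-negative operator on H, and L a self-adjoint operator on H. Let φ^ε solve dφ/dt = (iL − εΓ)φ with φ^ε(0) = φ₀, and let φ⁰(t) = e^{iLt}φ₀. Assume there is b < ∞ such that ‖φ⁰(t)‖_{H¹(Γ)} ≤ b‖φ₀‖ for all t ≥ 0, where ‖ψ‖²_{H¹(Γ)} = ⟨Γψ, ψ⟩. Then for all t ≥ 0, ‖φ^ε(t) − φ⁰(t)‖² ≤ 4b √(εt) ‖φ₀‖². -/

import Mathlib

open MeasureTheory

private lemma hasDerivAt_norm_sq' {H : Type*} [NormedAddCommGroup H] [InnerProductSpace ℂ H]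
    {ψ : ℝ → H} {d : H} {t : ℝ} (h : HasDerivAt ψ d t) :
    HasDerivAt (fun s => ‖ψ s‖ ^ 2) (2 * (inner ℂ (ψ t) d : ℂ).re) t := by
  have h1 : HasDerivAt (fun s => (inner ℂ (ψ s) (ψ s) : ℂ))
      ((inner ℂ (ψ t) d : ℂ) + inner ℂ d (ψ t)) t := h.inner ℂ h
  have h2 := Complex.reCLM.hasFDerivAt.comp_hasDerivAt t h1
  have h3 : (⇑Complex.reCLM ∘ fun s => (inner ℂ (ψ s) (ψ s) : ℂ)) = fun s => ‖ψ s‖ ^ 2 := by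
    funext s
    exact inner_self_eq_norm_sq (𝕜 := ℂ) (ψ s)
  rw [h3] at h2
  have h4 : Complex.reCLM ((inner ℂ (ψ t) d : ℂ) + inner ℂ d (ψ t))
      = 2 * (inner ℂ (ψ t) d : ℂ).re := by
    have h5 : (inner ℂ d (ψ t) : ℂ) = starRingEnd ℂ (inner ℂ (ψ t) d : ℂ) := (inner_conj_symm _ _).symm
    rw [h5, Complex.reCLM_apply, Complex.add_re, Complex.conj_re]
    ring
  rwa [h4] at h2

/-- Lemma 2.3a: closeness of the dissipative evolution to the free evolution when the
free evolution stays bounded in the `H¹(Γ)` norm `‖ψ‖₁ = √⟨Γψ, ψ⟩`. -/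
theorem stmt_0
    {H : Type*} [NormedAddCommGroup H] [InnerProductSpace ℂ H] [CompleteSpace H]
    (Γ L : H →L[ℂ] H)
    (hΓsa : IsSelfAdjoint Γ) (hLsa : IsSelfAdjoint L)
    (hΓpos : ∀ x : H, 0 ≤ (inner ℂ (Γ x) x : ℂ).re)
    (ε : ℝ) (hε : 0 < ε)
    (φe φ0 : ℝ → H)
    (hφe : ∀ t : ℝ, HasDerivAt φe (Complex.I • L (φe t) - ε • Γ (φe t)) t)
    (hφ0 : ∀ t : ℝ, HasDerivAt φ0 (Complex.I • L (φ0 t)) t)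
    (hinit : φe 0 = φ0 0)
    (b : ℝ) (hb : 0 ≤ b)
    (hH1 : ∀ t : ℝ, 0 ≤ t →
      Real.sqrt ((inner ℂ (Γ (φ0 t)) (φ0 t) : ℂ).re) ≤ b * ‖φ0 0‖) :
    ∀ t : ℝ, 0 ≤ t →
      ‖φe t - φ0 t‖ ^ 2 ≤ 4 * b * Real.sqrt (ε * t) * ‖φ0 0‖ ^ 2 := by
  have hΓsym : ∀ x y : H, (inner ℂ (Γ x) y : ℂ) = inner ℂ x (Γ y) := fun x y => hΓsa.isSymmetric x y
  have hLsym : ∀ x y : H, (inner ℂ (L x) y : ℂ) = inner ℂ x (L y) := fun x y => hLsa.isSymmetric x y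
  set c := ‖φ0 0‖ with hc
  have hc0 : (0:ℝ) ≤ c := norm_nonneg _
  -- the skew part contributes nothing to the real part
  have hLskew : ∀ x : H, (inner ℂ x (Complex.I • L x) : ℂ).re = 0 := by
    intro x
    have him : (inner ℂ x (L x) : ℂ).im = 0 := by
      have h1 : starRingEnd ℂ (inner ℂ x (L x) : ℂ) = inner ℂ x (L x) := by
        rw [inner_conj_symm]; exact hLsym x x
      exact (Complex.conj_eq_iff_im.mp h1)
    rw [inner_smul_right]
    simp [Complex.mul_re, him]
  -- Cauchy-Schwarz-type bound for the semidefinite form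
  have hCS : ∀ x y : H, (inner ℂ (Γ x) y : ℂ).re ≤
      (inner ℂ (Γ x) x : ℂ).re + (inner ℂ (Γ y) y : ℂ).re / 4 := by
    intro x y
    have h0 := hΓpos ((2:ℂ) • x - y)
    have hexp : (inner ℂ (Γ ((2:ℂ) • x - y)) ((2:ℂ) • x - y) : ℂ)
        = 4 * inner ℂ (Γ x) x - 2 * inner ℂ (Γ x) y - 2 * inner ℂ (Γ y) x + inner ℂ (Γ y) y := by
      simp [_root_.map_sub, _root_.map_smul, inner_sub_left, inner_sub_right, inner_smul_left,
        inner_smul_right, Complex.conj_ofNat]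
      ring
    have hswap : (inner ℂ (Γ y) x : ℂ).re = (inner ℂ (Γ x) y : ℂ).re := by
      have h1 : (inner ℂ (Γ y) x : ℂ) = starRingEnd ℂ (inner ℂ (Γ x) y : ℂ) := by
        rw [hΓsym y x, ← inner_conj_symm]
      rw [h1, Complex.conj_re]
    rw [hexp] at h0
    simp only [Complex.add_re, Complex.sub_re, Complex.mul_re, Complex.ofReal_re] at h0
    norm_num at h0
    linarith [h0, hswap]
  -- the free evolution has constant norm
  have hφ0deriv : ∀ s : ℝ, HasDerivAt (fun u => ‖φ0 u‖ ^ 2) 0 s := by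
    intro s
    have h := hasDerivAt_norm_sq' (hφ0 s)
    rwa [hLskew (φ0 s), mul_zero] at h
  have hφ0const : ∀ s : ℝ, ‖φ0 s‖ = c := by
    intro s
    have h := is_const_of_deriv_eq_zero (f := fun u => ‖φ0 u‖ ^ 2)
      (fun u => (hφ0deriv u).differentiableAt) (fun u => (hφ0deriv u).deriv) s 0
    have := congrArg Real.sqrt h
    rwa [Real.sqrt_sq (norm_nonneg _), Real.sqrt_sq (norm_nonneg _)] at this
  -- the dissipative evolution has decreasing norm
  have hφederiv : ∀ s : ℝ, HasDerivAt (fun u => ‖φe u‖ ^ 2)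
      (-(2 * ε * (inner ℂ (Γ (φe s)) (φe s) : ℂ).re)) s := by
    intro s
    have h := hasDerivAt_norm_sq' (hφe s)
    have hval : (2:ℝ) * (inner ℂ (φe s) (Complex.I • L (φe s) - ε • Γ (φe s)) : ℂ).re
        = -(2 * ε * (inner ℂ (Γ (φe s)) (φe s) : ℂ).re) := by
      rw [inner_sub_right]
      have h2 : ((ε:ℝ) • Γ (φe s) : H) = (ε:ℂ) • Γ (φe s) := by
        simp [Complex.coe_smul]
      rw [h2, Complex.sub_re, hLskew (φe s), inner_smul_right, Complex.re_ofReal_mul,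
        ← hΓsym]
      ring
    rwa [hval] at h
  have hφemono : ∀ s : ℝ, 0 ≤ s → ‖φe s‖ ≤ c := by
    intro s hs
    have hanti : Antitone (fun u => ‖φe u‖ ^ 2) := by
      apply antitone_of_deriv_nonpos (fun u => (hφederiv u).differentiableAt)
      intro u
      rw [(hφederiv u).deriv]
      have := hΓpos (φe u)
      nlinarith [hε.le]
    have h := hanti hs
    simp only at h
    have h0 : ‖φe 0‖ ^ 2 = c ^ 2 := by rw [hinit]
    have h2 : ‖φe s‖ ^ 2 ≤ c ^ 2 := by calc ‖φe s‖^2 ≤ ‖φe 0‖^2 := h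
                                          _ = c^2 := h0
    nlinarith [norm_nonneg (φe s)]
  -- the main differential inequality
  intro t ht
  set C : ℝ := ε * (b * c) ^ 2 / 2 with hC
  set f : ℝ → ℝ := fun u => ‖φe u - φ0 u‖ ^ 2 with hf
  have hfderiv : ∀ s : ℝ, HasDerivAt f
      (2 * (inner ℂ (φe s - φ0 s)
        ((Complex.I • L (φe s) - ε • Γ (φe s)) - Complex.I • L (φ0 s)) : ℂ).re) s :=
    fun s => hasDerivAt_norm_sq' ((hφe s).sub (hφ0 s))
  have hfbound : ∀ s : ℝ, 0 ≤ s →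
      2 * (inner ℂ (φe s - φ0 s)
        ((Complex.I • L (φe s) - ε • Γ (φe s)) - Complex.I • L (φ0 s)) : ℂ).re ≤ C := by
    intro s hs
    set ψ : H := φe s - φ0 s with hψ
    have hd : (Complex.I • L (φe s) - ε • Γ (φe s)) - Complex.I • L (φ0 s)
        = Complex.I • L ψ - (ε:ℂ) • Γ (φe s) := by
      rw [hψ, map_sub, smul_sub]
      simp [Complex.coe_smul]
      abel
    rw [hd, inner_sub_right, Complex.sub_re, hLskew ψ, inner_smul_right,
      Complex.re_ofReal_mul]
    -- re ⟪ψ, Γ φe⟫ ≥ -Q(φ0)/4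
    have h2 : -( (inner ℂ (Γ (φ0 s)) (φ0 s) : ℂ).re / 4) ≤ (inner ℂ ψ (Γ (φe s)) : ℂ).re := by
      have hsub : (inner ℂ ψ (Γ (φe s)) : ℂ) = inner ℂ (φe s) (Γ (φe s)) - inner ℂ (φ0 s) (Γ (φe s)) := by
        rw [hψ, inner_sub_left]
      have ha : (inner ℂ (φe s) (Γ (φe s)) : ℂ).re = (inner ℂ (Γ (φe s)) (φe s) : ℂ).re := by
        rw [← hΓsym]
      have hbb : (inner ℂ (φ0 s) (Γ (φe s)) : ℂ).re = (inner ℂ (Γ (φe s)) (φ0 s) : ℂ).re := by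
        have : (inner ℂ (φ0 s) (Γ (φe s)) : ℂ) = starRingEnd ℂ (inner ℂ (Γ (φe s)) (φ0 s) : ℂ) := by
          rw [← inner_conj_symm]
        rw [this, Complex.conj_re]
      have hcs := hCS (φe s) (φ0 s)
      rw [hsub]
      simp only [Complex.sub_re]
      rw [ha, hbb]
      linarith
    have hQ0 : (inner ℂ (Γ (φ0 s)) (φ0 s) : ℂ).re ≤ (b * c) ^ 2 := by
      have h4 := hH1 s hs
      have h5 := hΓpos (φ0 s)
      nlinarith [Real.sq_sqrt h5, Real.sqrt_nonneg ((inner ℂ (Γ (φ0 s)) (φ0 s) : ℂ).re)]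
    have hεQ : ε * (inner ℂ (Γ (φ0 s)) (φ0 s) : ℂ).re / 2 ≤ C := by
      rw [hC]; nlinarith [hε.le]
    nlinarith [h2, hε, hQ0]
  have hfdiff : Differentiable ℝ f := fun x => (hfderiv x).differentiableAt
  have hmain : f t ≤ C * t := by
    have hmono : MonotoneOn (fun u => C * u - f u) (Set.Ici (0:ℝ)) := by
      apply monotoneOn_of_deriv_nonneg (convex_Ici 0)
      · exact ((continuous_const.mul continuous_id).sub hfdiff.continuous).continuousOn
      · intro x _
        exact ((hasDerivAt_id x).const_mul C |>.sub (hfderiv x)).differentiableAt.differentiableWithinAt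
      · intro x hx
        rw [interior_Ici] at hx
        have hdx : HasDerivAt (fun u => C * u - f u) (C * 1 - _) x :=
          ((hasDerivAt_id x).const_mul C).sub (hfderiv x)
        rw [hdx.deriv]
        have := hfbound x (le_of_lt hx)
        linarith
    have h := hmono (Set.self_mem_Ici) (Set.mem_Ici.mpr ht) ht
    have hf0 : f 0 = 0 := by simp [hf, hinit]
    simp only [hf0, mul_zero, sub_zero] at h
    linarith
  -- conclude by case analysis
  set s : ℝ := b * Real.sqrt (ε * t) with hs
  have hs0 : 0 ≤ s := mul_nonneg hb (Real.sqrt_nonneg _)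
  have hsq : Real.sqrt (ε * t) ^ 2 = ε * t := Real.sq_sqrt (mul_nonneg hε.le ht)
  have hgoal : f t ≤ 4 * s * c ^ 2 := by
    rcases le_or_gt s 8 with hcase | hcase
    · have hCt : C * t = s ^ 2 * c ^ 2 / 2 := by
        rw [hC, hs]
        nlinarith [hsq]
      rw [hCt] at hmain
      nlinarith [sq_nonneg c, hs0, mul_nonneg (sub_nonneg.mpr hcase)
        (mul_nonneg hs0 (sq_nonneg c))]
    · have h1 : ‖φe t - φ0 t‖ ≤ 2 * c := by
        calc ‖φe t - φ0 t‖ ≤ ‖φe t‖ + ‖φ0 t‖ := norm_sub_le _ _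
          _ ≤ c + c := add_le_add (hφemono t ht) (le_of_eq (hφ0const t))
          _ = 2 * c := by ring
      have h2 : f t ≤ 4 * c ^ 2 := by
        have h3 := pow_le_pow_left₀ (norm_nonneg (φe t - φ0 t)) h1 2
        calc f t = ‖φe t - φ0 t‖ ^ 2 := rfl
          _ ≤ (2 * c) ^ 2 := h3
          _ = 4 * c ^ 2 := by ring
      nlinarith [h2, mul_nonneg (sq_nonneg c) (by linarith : (0:ℝ) ≤ s - 1)]
  calc ‖φe t - φ0 t‖ ^ 2 = f t := rfl
    _ ≤ 4 * s * c ^ 2 := hgoal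
    _ = 4 * b * Real.sqrt (ε * t) * c ^ 2 := by rw [hs]; ring
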